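/- There are exactly 14 six-tuples (x1, x2, x3, y1, y2, y3) of positive integers satisfying x1*y1 = x2 + 1, x2*y2 = x1 + x3, and x3*y3 = x2 + 1. -/
import Mathlib
set_option maxHeartbeats 1000000

lemma classify {x1 x2 x3 y1 y2 y3 : ℕ} (h1 : 0 < x1) (h2 : 0 < x2) (h3 : 0 < x3)
    (h4 : 0 < y1) (h5 : 0 < y2) (h6 : 0 < y3)
    (e1 : x1 * y1 = x2 + 1) (e2 : x2 * y2 = x1 + x3) (e3 : x3 * y3 = x2 + 1) :
    (x1=1∧x2=1∧x3=1∧y1=2∧y2=2∧y3=2)∨(x1=1∧x2=1∧x3=2∧y1=2∧y2=3∧y3=1)∨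
    (x1=2∧x2=1∧x3=1∧y1=1∧y2=3∧y3=2)∨(x1=2∧x2=1∧x3=2∧y1=1∧y2=4∧y3=1)∨
    (x1=1∧x2=2∧x3=1∧y1=3∧y2=1∧y3=3)∨(x1=1∧x2=2∧x3=3∧y1=3∧y2=2∧y3=1)∨
    (x1=3∧x2=2∧x3=1∧y1=1∧y2=2∧y3=3)∨(x1=3∧x2=2∧x3=3∧y1=1∧y2=3∧y3=1)∨
    (x1=1∧x2=3∧x3=2∧y1=4∧y2=1∧y3=2)∨(x1=2∧x2=3∧x3=1∧y1=2∧y2=1∧y3=4)∨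
    (x1=2∧x2=3∧x3=4∧y1=2∧y2=2∧y3=1)∨(x1=4∧x2=3∧x3=2∧y1=1∧y2=2∧y3=2)∨
    (x1=2∧x2=5∧x3=3∧y1=3∧y2=1∧y3=2)∨(x1=3∧x2=5∧x3=2∧y1=2∧y2=1∧y3=3) := by
  have hx1 : x1 ≤ x2 + 1 := by nlinarith
  have hx3 : x3 ≤ x2 + 1 := by nlinarith
  have hy2 : y2 ≤ 4 := by nlinarith
  interval_cases y2
  · -- y2 = 1 : x2 = x1 + x3
    have hy1 : 2 ≤ y1 := by nlinarith
    have hy3 : 2 ≤ y3 := by nlinarith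
    have d1 : x1 ≤ x3 + 1 := by nlinarith
    have d3 : x3 ≤ x1 + 1 := by nlinarith
    have hcase : x1 = x3 ∨ x3 = x1 + 1 ∨ x1 = x3 + 1 := by omega
    rcases hcase with h | h | h
    · have hd : x1 ∣ 2 * x1 + 1 := by
        rw [show 2 * x1 + 1 = x1 * y1 by omega]; exact dvd_mul_right _ _
      have hd1 : x1 ∣ 1 := (Nat.dvd_add_right ⟨2, by ring⟩).mp hd
      have hle := Nat.le_of_dvd one_pos hd1
      obtain ⟨rfl, rfl, rfl⟩ : x1 = 1 ∧ x2 = 2 ∧ x3 = 1 := by omega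
      obtain ⟨rfl, rfl⟩ : y1 = 3 ∧ y3 = 3 := by omega
      norm_num
    · have hd : x1 ∣ 2 * x1 + 2 := by
        rw [show 2 * x1 + 2 = x1 * y1 by omega]; exact dvd_mul_right _ _
      have hd1 : x1 ∣ 2 := (Nat.dvd_add_right ⟨2, by ring⟩).mp hd
      have hle := Nat.le_of_dvd two_pos hd1
      have : x1 = 1 ∨ x1 = 2 := by omega
      rcases this with rfl | rfl
      · obtain ⟨rfl, rfl⟩ : x2 = 3 ∧ x3 = 2 := by omega
        obtain ⟨rfl, rfl⟩ : y1 = 4 ∧ y3 = 2 := by omega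
        norm_num
      · obtain ⟨rfl, rfl⟩ : x2 = 5 ∧ x3 = 3 := by omega
        obtain ⟨rfl, rfl⟩ : y1 = 3 ∧ y3 = 2 := by omega
        norm_num
    · have hd : x3 ∣ 2 * x3 + 2 := by
        rw [show 2 * x3 + 2 = x3 * y3 by omega]; exact dvd_mul_right _ _
      have hd1 : x3 ∣ 2 := (Nat.dvd_add_right ⟨2, by ring⟩).mp hd
      have hle := Nat.le_of_dvd two_pos hd1
      have : x3 = 1 ∨ x3 = 2 := by omega
      rcases this with rfl | rfl
      · obtain ⟨rfl, rfl⟩ : x1 = 2 ∧ x2 = 3 := by omega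
        obtain ⟨rfl, rfl⟩ : y1 = 2 ∧ y3 = 4 := by omega
        norm_num
      · obtain ⟨rfl, rfl⟩ : x1 = 3 ∧ x2 = 5 := by omega
        obtain ⟨rfl, rfl⟩ : y1 = 2 ∧ y3 = 3 := by omega
        norm_num
  · -- y2 = 2 : 2 x2 = x1 + x3
    have hcase : x1 = x2 - 1 ∨ x1 = x2 ∨ x1 = x2 + 1 := by omega
    rcases hcase with h | h | h
    · -- x1 = x2 - 1, x1 * y1 = x1 + 2
      have hd : x1 ∣ x1 + 2 := by
        rw [show x1 + 2 = x1 * y1 by omega]; exact dvd_mul_right _ _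
      have hd1 : x1 ∣ 2 := (Nat.dvd_add_right ⟨1, by ring⟩).mp hd
      have hle := Nat.le_of_dvd two_pos hd1
      have : x1 = 1 ∨ x1 = 2 := by omega
      rcases this with rfl | rfl
      · obtain ⟨rfl, rfl⟩ : x2 = 2 ∧ x3 = 3 := by omega
        obtain ⟨rfl, rfl⟩ : y1 = 3 ∧ y3 = 1 := by omega
        norm_num
      · obtain ⟨rfl, rfl⟩ : x2 = 3 ∧ x3 = 4 := by omega
        obtain ⟨rfl, rfl⟩ : y1 = 2 ∧ y3 = 1 := by omega
        norm_num
    · -- x1 = x2 : x2 ∣ 1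
      subst h
      have hd : x1 ∣ x1 + 1 := by
        rw [show x1 + 1 = x1 * y1 by omega]; exact dvd_mul_right _ _
      have hd1 : x1 ∣ 1 := (Nat.dvd_add_right ⟨1, by ring⟩).mp hd
      have hle := Nat.le_of_dvd one_pos hd1
      obtain ⟨rfl, rfl⟩ : x1 = 1 ∧ x3 = 1 := by omega
      obtain ⟨rfl, rfl⟩ : y1 = 2 ∧ y3 = 2 := by omega
      norm_num
    · -- x1 = x2 + 1, x3 = x2 - 1, x3 * y3 = x3 + 2
      have hd : x3 ∣ x3 + 2 := by
        rw [show x3 + 2 = x3 * y3 by omega]; exact dvd_mul_right _ _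
      have hd1 : x3 ∣ 2 := (Nat.dvd_add_right ⟨1, by ring⟩).mp hd
      have hle := Nat.le_of_dvd two_pos hd1
      have : x3 = 1 ∨ x3 = 2 := by omega
      rcases this with rfl | rfl
      · obtain ⟨rfl, rfl⟩ : x1 = 3 ∧ x2 = 2 := by omega
        obtain ⟨rfl, rfl⟩ : y1 = 1 ∧ y3 = 3 := by omega
        norm_num
      · obtain ⟨rfl, rfl⟩ : x1 = 4 ∧ x2 = 3 := by omega
        obtain ⟨rfl, rfl⟩ : y1 = 1 ∧ y3 = 2 := by omega
        norm_num
  · -- y2 = 3 : 3 x2 = x1 + x3 ≤ 2 x2 + 2, so x2 ≤ 2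
    have hx2 : x2 ≤ 2 := by omega
    have : x2 = 1 ∨ x2 = 2 := by omega
    rcases this with rfl | rfl
    · -- x1 + x3 = 3, x1, x3 ≤ 2
      have : x1 = 1 ∨ x1 = 2 := by omega
      rcases this with rfl | rfl
      · obtain rfl : x3 = 2 := by omega
        obtain ⟨rfl, rfl⟩ : y1 = 2 ∧ y3 = 1 := by omega
        norm_num
      · obtain rfl : x3 = 1 := by omega
        obtain ⟨rfl, rfl⟩ : y1 = 1 ∧ y3 = 2 := by omega
        norm_num
    · -- x1 + x3 = 6, x1, x3 ≤ 3
      obtain ⟨rfl, rfl⟩ : x1 = 3 ∧ x3 = 3 := by omega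
      obtain ⟨rfl, rfl⟩ : y1 = 1 ∧ y3 = 1 := by omega
      norm_num
  · -- y2 = 4 : 4 x2 = x1 + x3 ≤ 2 x2 + 2, so x2 = 1
    obtain ⟨rfl, rfl, rfl⟩ : x1 = 2 ∧ x2 = 1 ∧ x3 = 2 := by omega
    obtain ⟨rfl, rfl⟩ : y1 = 1 ∧ y3 = 1 := by omega
    norm_num
theorem stmt6 :
    {p : ℕ × ℕ × ℕ × ℕ × ℕ × ℕ |
      0 < p.1 ∧ 0 < p.2.1 ∧ 0 < p.2.2.1 ∧ 0 < p.2.2.2.1 ∧ 0 < p.2.2.2.2.1 ∧ 0 < p.2.2.2.2.2 ∧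
      p.1 * p.2.2.2.1 = p.2.1 + 1 ∧
      p.2.1 * p.2.2.2.2.1 = p.1 + p.2.2.1 ∧
      p.2.2.1 * p.2.2.2.2.2 = p.2.1 + 1}.ncard = 14 := by
  have hset : {p : ℕ × ℕ × ℕ × ℕ × ℕ × ℕ |
      0 < p.1 ∧ 0 < p.2.1 ∧ 0 < p.2.2.1 ∧ 0 < p.2.2.2.1 ∧ 0 < p.2.2.2.2.1 ∧ 0 < p.2.2.2.2.2 ∧
      p.1 * p.2.2.2.1 = p.2.1 + 1 ∧
      p.2.1 * p.2.2.2.2.1 = p.1 + p.2.2.1 ∧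
      p.2.2.1 * p.2.2.2.2.2 = p.2.1 + 1} =
      ↑({(1,1,1,2,2,2),(1,1,2,2,3,1),(2,1,1,1,3,2),(2,1,2,1,4,1),
        (1,2,1,3,1,3),(1,2,3,3,2,1),(3,2,1,1,2,3),(3,2,3,1,3,1),
        (1,3,2,4,1,2),(2,3,1,2,1,4),(2,3,4,2,2,1),(4,3,2,1,2,2),
        (2,5,3,3,1,2),(3,5,2,2,1,3)} : Finset (ℕ × ℕ × ℕ × ℕ × ℕ × ℕ)) := by
    ext ⟨x1, x2, x3, y1, y2, y3⟩
    simp only [Set.mem_setOf_eq, Finset.coe_insert, Set.mem_insert_iff, Finset.coe_singleton,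
      Set.mem_singleton_iff, Prod.mk.injEq]
    constructor
    · rintro ⟨h1, h2, h3, h4, h5, h6, e1, e2, e3⟩
      exact classify h1 h2 h3 h4 h5 h6 e1 e2 e3
    · rintro (h | h | h | h | h | h | h | h | h | h | h | h | h | h) <;>
        obtain ⟨rfl, rfl, rfl, rfl, rfl, rfl⟩ := h <;> norm_num
  rw [hset, Set.ncard_coe_finset]
  rfl
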